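/- Let F be a complex Borel measure on ℝ² (so its total variation measure |F| is finite), let T > 0, and define C : ℝ × ℝ → ℂ by C(s,t) = ∫_{ℝ²} e^{i(sλ − tλ')} dF(λ,λ'). Then C(s+T, t+T) = C(s,t) for all s, t ∈ ℝ if and only if F is concentrated on the union of the lines L_k = {(λ,λ') ∈ ℝ² : λ − λ' = 2πk/T}, k ∈ ℤ, i.e. |F|({(λ,λ') ∈ ℝ² : λ − λ' ∉ (2π/T)·ℤ}) = 0. -/

import Mathlib

open MeasureTheory Real

section Aux

open MeasureTheory Real FourierTransform
open scoped RealInnerProductSpace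

variable {V : Type*} [NormedAddCommGroup V] [InnerProductSpace ℝ V] [FiniteDimensional ℝ V]
  [MeasurableSpace V] [BorelSpace V]

/-- A smooth compactly supported function is a Schwartz map. -/
noncomputable def toSchwartz (g : V → ℂ) (hs : ContDiff ℝ (⊤ : ℕ∞) g) (hc : HasCompactSupport g) :
    SchwartzMap V ℂ where
  toFun := g
  smooth' := hs
  decay' := by
    intro k n
    have h1 : Continuous fun x : V => ‖x‖ ^ k * ‖iteratedFDeriv ℝ n g x‖ :=
      ((continuous_norm.pow k).mul (hs.continuous_iteratedFDeriv (by exact_mod_cast le_top)).norm)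
    have h2 : HasCompactSupport fun x : V => ‖x‖ ^ k * ‖iteratedFDeriv ℝ n g x‖ :=
      ((hc.iteratedFDeriv n).norm).mul_left
    obtain ⟨C, hC⟩ := h1.bounded_above_of_compact_support h2
    refine ⟨C, fun x => ?_⟩
    have := hC x
    rw [Real.norm_eq_abs] at this
    exact (le_abs_self _).trans this

@[simp] lemma toSchwartz_apply (g : V → ℂ) (hs hc) (x : V) : toSchwartz g hs hc x = g x := rfl

set_option linter.unusedSectionVars false

lemma bdd_integrable {α : Type*} [MeasurableSpace α] (μ : Measure α) [IsFiniteMeasure μ]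
    {g : α → ℂ} {c : ℝ}
    (hg : AEStronglyMeasurable g μ) (hb : ∀ x, ‖g x‖ ≤ c) : Integrable g μ :=
  (integrable_const c).mono' hg (ae_of_all _ hb)

lemma schwartz_integral_zero (μ : Measure V) [IsFiniteMeasure μ] {h : V → ℂ}
    (hm : Measurable h) (hb : ∀ x, ‖h x‖ ≤ 2)
    (hz : ∀ v : V, ∫ x, Complex.exp (Complex.I * (⟪v, x⟫ : ℝ)) * h x ∂μ = 0)
    (ψ : SchwartzMap V ℂ) : ∫ x, ψ x * h x ∂μ = 0 := by
  have hInt : Integrable h μ := bdd_integrable μ hm.aestronglyMeasurable hb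
  set φ := (SchwartzMap.fourierTransformCLE ℝ (SchwartzMap V ℂ) (F := SchwartzMap V ℂ)).symm ψ with hφdef
  have hψ : ∀ x, ψ x = 𝓕 (⇑φ) x := by
    intro x
    conv_lhs => rw [← (SchwartzMap.fourierTransformCLE ℝ (SchwartzMap V ℂ) (F := SchwartzMap V ℂ)).apply_symm_apply ψ]
    rfl
  -- the double integrand
  have hmeas : AEStronglyMeasurable
      (fun z : V × V => Complex.exp (↑(-2 * π * ⟪z.2, z.1⟫) * Complex.I) * φ z.2 * h z.1)
      (μ.prod volume) := by
    apply Measurable.aestronglyMeasurable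
    have hinner : Measurable fun z : V × V => (⟪z.2, z.1⟫ : ℝ) :=
      (continuous_inner.comp (continuous_snd.prodMk continuous_fst)).measurable
    fun_prop
  have hprodInt : Integrable
      (fun z : V × V => Complex.exp (↑(-2 * π * ⟪z.2, z.1⟫) * Complex.I) * φ z.2 * h z.1)
      (μ.prod volume) := by
    have hbd : Integrable (fun z : V × V => ‖h z.1‖ * ‖(φ z.2 : ℂ)‖) (μ.prod volume) :=
      hInt.norm.mul_prod φ.integrable.norm
    refine hbd.mono' hmeas (ae_of_all _ fun z => ?_)
    rw [norm_mul, norm_mul, Complex.norm_exp]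
    simp [mul_comm]
  calc ∫ x, ψ x * h x ∂μ
      = ∫ x, (∫ v, Complex.exp (↑(-2 * π * ⟪v, x⟫) * Complex.I) * φ v) * h x ∂μ := by
        congr 1; ext x
        rw [hψ x, Real.fourier_eq']
        simp [smul_eq_mul]
    _ = ∫ x, ∫ v, Complex.exp (↑(-2 * π * ⟪v, x⟫) * Complex.I) * φ v * h x ∂volume ∂μ := by
        congr 1; ext x
        rw [← integral_mul_const]
    _ = ∫ v, ∫ x, Complex.exp (↑(-2 * π * ⟪v, x⟫) * Complex.I) * φ v * h x ∂μ ∂volume := by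
        exact integral_integral_swap hprodInt
    _ = 0 := by
        rw [← integral_zero V ℂ (μ := (volume : Measure V))]
        congr 1; ext v
        have h0 : ∀ x, Complex.exp (↑(-2 * π * ⟪v, x⟫) * Complex.I) * φ v * h x
            = φ v * (Complex.exp (Complex.I * (⟪(-2 * π) • v, x⟫ : ℝ)) * h x) := by
          intro x
          rw [real_inner_smul_left]
          push_cast
          rw [mul_comm Complex.I]
          ring
        simp_rw [h0]
        rw [integral_const_mul, hz ((-2 * π) • v), mul_zero]

lemma smooth_integral_zero (μ : Measure V) [IsFiniteMeasure μ] {h : V → ℂ}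
    (hm : Measurable h) (hb : ∀ x, ‖h x‖ ≤ 2)
    (hz : ∀ v : V, ∫ x, Complex.exp (Complex.I * (⟪v, x⟫ : ℝ)) * h x ∂μ = 0)
    (g : V → ℝ) (hs : ContDiff ℝ (⊤ : ℕ∞) g) (hc : HasCompactSupport g) :
    ∫ x, (g x : ℂ) * h x ∂μ = 0 := by
  have hs' : ContDiff ℝ (⊤ : ℕ∞) fun x => (g x : ℂ) :=
    Complex.ofRealCLM.contDiff.comp hs
  have hc' : HasCompactSupport fun x => (g x : ℂ) :=
    hc.comp_left (g := fun r : ℝ => (r : ℂ)) Complex.ofReal_zero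
  exact schwartz_integral_zero μ hm hb hz (toSchwartz _ hs' hc')

lemma open_integral_zero (μ : Measure V) [IsFiniteMeasure μ] {h : V → ℂ}
    (hm : Measurable h) (hb : ∀ x, ‖h x‖ ≤ 2)
    (hz : ∀ v : V, ∫ x, Complex.exp (Complex.I * (⟪v, x⟫ : ℝ)) * h x ∂μ = 0)
    {U : Set V} (hU : IsOpen U) : ∫ x in U, h x ∂μ = 0 := by
  have hInt : Integrable h μ := bdd_integrable μ hm.aestronglyMeasurable hb
  obtain ⟨g, g_supp, g_diff, g_range⟩ := hU.exists_contDiff_support_eq (n := ⊤)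
  have g01 : ∀ x, 0 ≤ g x ∧ g x ≤ 1 := fun x => g_range ⟨x, rfl⟩
  -- cutoff bumps
  let bump : ℕ → ContDiffBump (0 : V) := fun n =>
    { rIn := n + 1, rOut := n + 2, rIn_pos := by positivity, rIn_lt_rOut := by linarith }
  let seq : ℕ → V → ℝ := fun n x => (bump n) x * (1 - (1 - g x) ^ n)
  have hseq : ∀ n x, seq n x = (bump n) x * (1 - (1 - g x) ^ n) := fun n x => rfl
  have hrIn : ∀ n : ℕ, (bump n).rIn = n + 1 := fun n => rfl
  have seq_smooth : ∀ n, ContDiff ℝ (⊤ : ℕ∞) (seq n) := fun n =>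
    ((bump n).contDiff).mul ((contDiff_const.sub ((contDiff_const.sub g_diff).pow n)))
  have seq_supp : ∀ n, HasCompactSupport (seq n) := fun n =>
    ((bump n).hasCompactSupport).mul_right
  have seq_bd : ∀ n x, |seq n x| ≤ 1 := by
    intro n x
    have h1 : 0 ≤ (1 - g x) ^ n := pow_nonneg (by linarith [(g01 x).2]) n
    have h2 : (1 - g x) ^ n ≤ 1 := pow_le_one₀ (by linarith [(g01 x).2]) (by linarith [(g01 x).1])
    have hb1 := (bump n).nonneg (x := x)
    have hb2 := (bump n).le_one (x := x)
    simp only [hseq]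
    rw [abs_le]
    constructor <;> nlinarith
  have seq_tendsto : ∀ x, Filter.Tendsto (fun n => seq n x) Filter.atTop
      (nhds (Set.indicator U (fun _ => (1 : ℝ)) x)) := by
    intro x
    by_cases hx : x ∈ U
    · have hgx : 0 < g x := by
        have : g x ≠ 0 := by
          have : x ∈ Function.support g := g_supp ▸ hx
          exact this
        exact lt_of_le_of_ne (g01 x).1 (Ne.symm this)
      have hxlim : Filter.Tendsto (fun n : ℕ => (1 - g x) ^ n) Filter.atTop (nhds 0) := by
        apply tendsto_pow_atTop_nhds_zero_of_abs_lt_one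
        rw [abs_lt]; constructor <;> [linarith [(g01 x).2]; linarith]
      have hbump1 : ∀ᶠ n : ℕ in Filter.atTop, (bump n) x = 1 := by
        filter_upwards [Filter.eventually_ge_atTop (Nat.ceil ‖x‖)] with n hn
        apply (bump n).one_of_mem_closedBall
        simp only [Metric.mem_closedBall, dist_zero_right, hrIn]
        calc ‖x‖ ≤ (Nat.ceil ‖x‖ : ℝ) := Nat.le_ceil _
          _ ≤ n := by exact_mod_cast hn
          _ ≤ n + 1 := by linarith
      rw [Set.indicator_of_mem hx]
      have : Filter.Tendsto (fun n : ℕ => 1 - (1 - g x) ^ n) Filter.atTop (nhds 1) := by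
        simpa using (tendsto_const_nhds (x := (1:ℝ))).sub hxlim
      have heq : (fun n => seq n x) =ᶠ[Filter.atTop] (fun n : ℕ => 1 - (1 - g x) ^ n) := by
        filter_upwards [hbump1] with n hn
        simp [hseq, hn]
      exact (Filter.tendsto_congr' heq).mpr this
    · have hgx : g x = 0 := by
        by_contra hne
        exact hx (g_supp ▸ (Function.mem_support.mpr hne))
      rw [Set.indicator_of_notMem hx]
      have : ∀ᶠ n : ℕ in Filter.atTop, seq n x = 0 := by
        filter_upwards [Filter.eventually_ge_atTop 1] with n hn
        simp [hseq, hgx, one_pow]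
      have heq : (fun n => seq n x) =ᶠ[Filter.atTop] (fun _ : ℕ => (0 : ℝ)) := by
        filter_upwards [this] with n hn
        exact hn
      exact (Filter.tendsto_congr' heq).mpr tendsto_const_nhds
  -- dominated convergence
  have hlim : Filter.Tendsto (fun n => ∫ x, (seq n x : ℂ) * h x ∂μ) Filter.atTop
      (nhds (∫ x, ((Set.indicator U (fun _ => (1 : ℝ)) x : ℝ) : ℂ) * h x ∂μ)) := by
    apply tendsto_integral_of_dominated_convergence (bound := fun _ => (2 : ℝ))
    · intro n
      exact (Complex.measurable_ofReal.comp (seq_smooth n).continuous.measurable |>.mul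
        hm).aestronglyMeasurable
    · exact integrable_const 2
    · intro n
      filter_upwards with x
      rw [norm_mul]
      have : ‖((seq n x : ℝ) : ℂ)‖ ≤ 1 := by
        rw [Complex.norm_real, Real.norm_eq_abs]; exact seq_bd n x
      calc ‖((seq n x : ℝ) : ℂ)‖ * ‖h x‖ ≤ 1 * 2 :=
        mul_le_mul this (hb x) (norm_nonneg _) zero_le_one
      _ = 2 := one_mul 2
    · filter_upwards with x
      exact (Complex.continuous_ofReal.tendsto _ |>.comp (seq_tendsto x)).mul tendsto_const_nhds
  have hzero : ∀ n, ∫ x, (seq n x : ℂ) * h x ∂μ = 0 := fun n =>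
    smooth_integral_zero μ hm hb hz (seq n) (seq_smooth n) (seq_supp n)
  have h0 : (∫ x, ((Set.indicator U (fun _ => (1 : ℝ)) x : ℝ) : ℂ) * h x ∂μ) = 0 := by
    have h1 : Filter.Tendsto (fun _ : ℕ => (0 : ℂ)) Filter.atTop
        (nhds (∫ x, ((Set.indicator U (fun _ => (1 : ℝ)) x : ℝ) : ℂ) * h x ∂μ)) := by
      refine (Filter.tendsto_congr fun n => (hzero n).symm).mpr hlim
    exact (tendsto_nhds_unique tendsto_const_nhds h1).symm
  rw [← h0]
  rw [← integral_indicator hU.measurableSet]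
  congr 1; ext x
  by_cases hx : x ∈ U
  · simp [Set.indicator_of_mem hx]
  · simp [Set.indicator_of_notMem hx]

lemma key_ae_zero (μ : Measure V) [IsFiniteMeasure μ] {h : V → ℂ}
    (hm : Measurable h) (hb : ∀ x, ‖h x‖ ≤ 2)
    (hz : ∀ v : V, ∫ x, Complex.exp (Complex.I * (⟪v, x⟫ : ℝ)) * h x ∂μ = 0) :
    ∀ᵐ x ∂μ, h x = 0 := by
  have hInt : Integrable h μ := bdd_integrable μ hm.aestronglyMeasurable hb
  have hall : ∀ ⦃s : Set V⦄, MeasurableSet s → ∫ x in s, h x ∂μ = 0 := by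
    have heq : ‹MeasurableSpace V› = MeasurableSpace.generateFrom {s : Set V | IsOpen s} :=
      BorelSpace.measurable_eq (α := V)
    refine MeasurableSpace.induction_on_inter (C := fun s _ => ∫ x in s, h x ∂μ = 0)
      heq isPiSystem_isOpen ?_ ?_ ?_ ?_
    · simp
    · intro U hU
      exact open_integral_zero μ hm hb hz hU
    · intro t ht h0
      have := integral_add_compl ht hInt
      have huniv : ∫ x, h x ∂μ = 0 := by
        rw [← Measure.restrict_univ (μ := μ)]
        exact open_integral_zero μ hm hb hz isOpen_univ
      rw [h0, zero_add] at this
      rw [this, huniv]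
    · intro g hdisj hmeas h0
      have hs := hasSum_integral_iUnion hmeas hdisj hInt.integrableOn
      simp_rw [h0] at hs
      exact hs.unique hasSum_zero
  have := ae_eq_zero_of_forall_setIntegral_eq_of_sigmaFinite
    (μ := μ) (f := h) (fun s _ _ => hInt.integrableOn) (fun s hs _ => hall hs)
  exact this


end Aux

open scoped RealInnerProductSpace FourierTransform


/-- A complex Borel measure `F` on `ℝ²` is encoded by its polar decomposition
`dF = f dμ`, where `μ = |F|` is the (finite) total variation measure and `f` is a
measurable density of modulus one.  `C(s,t) = ∫ e^{i(sλ - tλ')} dF(λ,λ')` is periodic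
with period `T` along the diagonal iff `F` is concentrated on the union of the lines
`λ - λ' = 2πk/T`, `k ∈ ℤ`. -/
theorem stmt18 (μ : Measure (ℝ × ℝ)) [IsFiniteMeasure μ]
    (f : ℝ × ℝ → ℂ) (hf_meas : Measurable f) (hf : ∀ x, ‖f x‖ = 1)
    (T : ℝ) (hT : 0 < T)
    (C : ℝ → ℝ → ℂ)
    (hC : ∀ s t : ℝ, C s t =
      ∫ x : ℝ × ℝ, Complex.exp (Complex.I * ((s * x.1 - t * x.2 : ℝ) : ℂ)) * f x ∂μ) :
    (∀ s t : ℝ, C (s + T) (t + T) = C s t) ↔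
      μ {x : ℝ × ℝ | ¬ ∃ k : ℤ, x.1 - x.2 = 2 * π * k / T} = 0 := by
  have hfnorm : ∀ x, ‖f x‖ = 1 := fun x => hf x
  set E : ℝ → ℝ → ℝ × ℝ → ℂ :=
    fun s t p => Complex.exp (Complex.I * ((s * p.1 - t * p.2 : ℝ) : ℂ)) with hE
  have hEnorm : ∀ s t p, ‖E s t p‖ = 1 := by
    intro s t p
    simp only [hE, Complex.norm_exp, Complex.mul_re, Complex.I_re,
      Complex.ofReal_re, Complex.I_im, Complex.ofReal_im]
    norm_num
  have hEmeas : ∀ s t, Measurable (E s t) := by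
    intro s t
    simp only [hE]
    fun_prop
  have hfInt : ∀ s t, Integrable (fun p => E s t p * f p) μ := by
    intro s t
    refine bdd_integrable μ ((hEmeas s t).mul hf_meas).aestronglyMeasurable (c := 1) fun p => ?_
    rw [norm_mul, hEnorm, hfnorm, mul_one]
  set h : ℝ × ℝ → ℂ :=
    fun p => (Complex.exp (Complex.I * ((T * (p.1 - p.2) : ℝ) : ℂ)) - 1) * f p with hh
  have hmh : Measurable h := by
    simp only [hh]
    fun_prop
  have hbh : ∀ p, ‖h p‖ ≤ 2 := by
    intro p
    rw [hh, norm_mul, hfnorm, mul_one]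
    calc ‖Complex.exp (Complex.I * ((T * (p.1 - p.2) : ℝ) : ℂ)) - 1‖
        ≤ ‖Complex.exp (Complex.I * ((T * (p.1 - p.2) : ℝ) : ℂ))‖ + ‖(1 : ℂ)‖ := norm_sub_le _ _
      _ ≤ 2 := by
            have h1 : ‖Complex.exp (Complex.I * ((T * (p.1 - p.2) : ℝ) : ℂ))‖ = 1 := by
              simp only [Complex.norm_exp, Complex.mul_re, Complex.I_re,
                Complex.ofReal_re, Complex.I_im, Complex.ofReal_im]
              norm_num
            rw [h1]; norm_num
  -- key pointwise identity
  have hEkey : ∀ s t p, E s t p * h p = E (s + T) (t + T) p * f p - E s t p * f p := by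
    intro s t p
    have hEe : E s t p * Complex.exp (Complex.I * ((T * (p.1 - p.2) : ℝ) : ℂ))
        = E (s + T) (t + T) p := by
      simp only [hE]
      rw [← Complex.exp_add]
      congr 1
      push_cast
      ring
    rw [hh, ← hEe]
    ring
  constructor
  · intro hper
    have hdiff : ∀ s t : ℝ, ∫ p, E s t p * h p ∂μ = 0 := by
      intro s t
      simp_rw [hEkey]
      rw [integral_sub (hfInt (s + T) (t + T)) (hfInt s t), ← hC, ← hC, hper s t, sub_self]
    -- transfer to EuclideanSpace
    set φ : ℝ × ℝ → EuclideanSpace ℝ (Fin 2) :=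
      fun p => (EuclideanSpace.equiv (Fin 2) ℝ).symm ![p.1, p.2] with hφ
    have hφc : Continuous φ := by
      apply (EuclideanSpace.equiv (Fin 2) ℝ).symm.continuous.comp
      apply continuous_pi
      intro i
      fin_cases i
      · exact continuous_fst
      · exact continuous_snd
    have hφm : Measurable φ := hφc.measurable
    set ρ : EuclideanSpace ℝ (Fin 2) → ℝ × ℝ := fun y => (y 0, y 1) with hρ
    have hρc : Continuous ρ := by
      have h0 : Continuous fun y : EuclideanSpace ℝ (Fin 2) => y 0 :=
        (continuous_apply (0 : Fin 2)).comp (EuclideanSpace.equiv (Fin 2) ℝ).continuous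
      have h1 : Continuous fun y : EuclideanSpace ℝ (Fin 2) => y 1 :=
        (continuous_apply (1 : Fin 2)).comp (EuclideanSpace.equiv (Fin 2) ℝ).continuous
      exact h0.prodMk h1
    have hρφ : ∀ p, ρ (φ p) = p := fun p => rfl
    have hinner : ∀ (v : EuclideanSpace ℝ (Fin 2)) (p : ℝ × ℝ),
        ⟪v, φ p⟫ = v 0 * p.1 + v 1 * p.2 := by
      intro v p
      simp [PiLp.inner_apply, RCLike.inner_apply, Fin.sum_univ_two, hφ]; ring
    haveI : IsFiniteMeasure (μ.map φ) :=
      ⟨by rw [Measure.map_apply hφm MeasurableSet.univ]; exact measure_lt_top μ _⟩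
    have hz : ∀ v : EuclideanSpace ℝ (Fin 2),
        ∫ y, Complex.exp (Complex.I * ((⟪v, y⟫ : ℝ) : ℂ)) * h (ρ y) ∂(μ.map φ) = 0 := by
      intro v
      have hinnerc : Continuous fun y : EuclideanSpace ℝ (Fin 2) => (⟪v, y⟫ : ℝ) :=
        Continuous.inner continuous_const continuous_id
      have hgm : Measurable fun y : EuclideanSpace ℝ (Fin 2) =>
          Complex.exp (Complex.I * ((⟪v, y⟫ : ℝ) : ℂ)) * h (ρ y) := by
        have := hinnerc.measurable
        have := hρc.measurable
        fun_prop
      rw [integral_map hφm.aemeasurable hgm.aestronglyMeasurable]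
      have : ∀ p : ℝ × ℝ, Complex.exp (Complex.I * ((⟪v, φ p⟫ : ℝ) : ℂ)) * h (ρ (φ p))
          = E (v 0) (-(v 1)) p * h p := by
        intro p
        rw [hρφ, hinner]
        simp only [hE]
        congr 2
        push_cast
        ring
      simp_rw [this]
      exact hdiff (v 0) (-(v 1))
    have hae := key_ae_zero (μ.map φ) ((hmh.comp hρc.measurable)) (fun y => hbh (ρ y)) hz
    rw [ae_iff] at hae
    rw [Measure.map_apply hφm] at hae
    swap
    · exact (measurableSet_eq_fun (hmh.comp hρc.measurable) measurable_const).compl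
    -- the pulled-back set contains {p | h p ≠ 0}
    have hae2 : μ {p : ℝ × ℝ | ¬ h p = 0} = 0 := by
      refine measure_mono_null ?_ hae
      intro p hp
      simpa [hρφ p] using hp
    refine measure_mono_null (fun p hp => ?_) hae2
    simp only [Set.mem_setOf_eq] at hp ⊢
    intro hzero
    apply hp
    have hfne : f p ≠ 0 := by
      intro h0
      have := hf p
      rw [h0] at this
      simpa using this
    have hexp : Complex.exp (Complex.I * ((T * (p.1 - p.2) : ℝ) : ℂ)) = 1 := by
      simp only [hh] at hzero
      rcases mul_eq_zero.mp hzero with h1 | h2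
      · exact sub_eq_zero.mp h1
      · exact absurd h2 hfne
    rw [Complex.exp_eq_one_iff] at hexp
    obtain ⟨n, hn⟩ := hexp
    refine ⟨n, ?_⟩
    have h2 := congrArg Complex.im hn
    simp [Complex.mul_im] at h2
    have hreal : T * (p.1 - p.2) = 2 * π * n := by linarith
    field_simp
    linarith
  · intro hnull s t
    rw [hC, hC]
    have hae : ∀ᵐ x ∂μ, ∃ k : ℤ, x.1 - x.2 = 2 * π * k / T := by
      rw [ae_iff]
      exact hnull
    apply integral_congr_ae
    filter_upwards [hae] with x hx
    obtain ⟨k, hk⟩ := hx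
    have h1 : (s + T) * x.1 - (t + T) * x.2 = (s * x.1 - t * x.2) + 2 * π * k := by
      have : T * (x.1 - x.2) = 2 * π * k := by
        rw [hk]; field_simp
      nlinarith [this]
    congr 1
    rw [h1]
    push_cast
    rw [mul_add, Complex.exp_add]
    have : Complex.exp (Complex.I * (2 * ↑π * ↑k)) = 1 := by
      rw [show Complex.I * (2 * ↑π * ↑k) = (k : ℂ) * (2 * ↑π * Complex.I) by ring]
      exact Complex.exp_int_mul_two_pi_mul_I k
    rw [this, mul_one]
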